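/- arXiv:1710.05992 — 2 statements merged into one kernel-verified Lean document; each statement's English description precedes it below -/
import Mathlib

section
/- The set of power series of the form a(T) = T + ∑_{i≥1} a_i T^{2^i} over an 𝔽_2-algebra A forms a group under composition of power series. -/
noncomputable section

variable (A : Type*) [CommRing A]

/-- Composition `f(g(T))` of one-variable power series, for `g` with zero constant
term: the `n`-th coefficient is `∑_{k ≤ n} f_k · coeff n (g^k)`. -/
def psComp (f g : PowerSeries A) : PowerSeries A :=
  PowerSeries.mk fun n =>
    ∑ k ∈ Finset.range (n + 1), PowerSeries.coeff k f * PowerSeries.coeff n (g ^ k)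

/-- The predicate describing power series of the form `T + ∑_{i≥1} a_i T^{2^i}`:
the linear coefficient is `1` and all coefficients away from degrees `2^i` vanish. -/
def IsAdditiveSeries (f : PowerSeries A) : Prop :=
  PowerSeries.coeff 1 f = 1 ∧
    ∀ k : ℕ, (¬ ∃ i : ℕ, k = 2 ^ i) → PowerSeries.coeff k f = 0

variable {A}

lemma coeff_psComp (f g : PowerSeries A) (n : ℕ) :
    PowerSeries.coeff n (psComp A f g) =
      ∑ k ∈ Finset.range (n + 1),
        PowerSeries.coeff k f * PowerSeries.coeff n (g ^ k) := by
  simp [psComp]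

lemma coeff_sq [CharP A 2] (g : PowerSeries A) (n : ℕ) :
    PowerSeries.coeff n (g ^ 2) =
      if 2 ∣ n then (PowerSeries.coeff (n / 2) g) ^ 2 else 0 := by
  classical
  rw [sq, PowerSeries.coeff_mul]
  by_cases h : 2 ∣ n
  · obtain ⟨m, rfl⟩ := h
    have hmem : ((m, m) : ℕ × ℕ) ∈ Finset.HasAntidiagonal.antidiagonal (2 * m) := by
      simp [Finset.HasAntidiagonal.mem_antidiagonal, two_mul]
    rw [← Finset.sum_erase_add _ _ hmem]
    have hz : ∑ p ∈ (Finset.HasAntidiagonal.antidiagonal (2 * m)).erase (m, m),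
        PowerSeries.coeff p.1 g * PowerSeries.coeff p.2 g = 0 := by
      apply Finset.sum_involution (fun p _ => (p.2, p.1))
      · intro p _
        rw [mul_comm]
        exact CharTwo.add_self_eq_zero _
      · intro p hp _
        simp only [Finset.mem_erase, Finset.HasAntidiagonal.mem_antidiagonal] at hp
        intro hc
        apply hp.1
        have h1 : p.2 = p.1 := congrArg Prod.fst hc
        have : p = (m, m) := by
          obtain ⟨x, y⟩ := p
          simp only [Prod.mk.injEq] at h1 ⊢
          omega
        exact this
      · intro p hp
        simp only [Finset.mem_erase, Finset.HasAntidiagonal.mem_antidiagonal] at hp ⊢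
        constructor
        · intro hc
          apply hp.1
          obtain ⟨x, y⟩ := p
          simp only [Prod.mk.injEq] at hc ⊢
          omega
        · omega
      · intro p _
        rfl
    rw [hz, zero_add, if_pos ⟨m, rfl⟩]
    rw [Nat.mul_div_cancel_left m (by norm_num : 0 < 2), sq]
  · rw [if_neg h]
    apply Finset.sum_involution (fun p _ => (p.2, p.1))
    · intro p _
      rw [mul_comm]
      exact CharTwo.add_self_eq_zero _
    · intro p hp _
      simp only [Finset.HasAntidiagonal.mem_antidiagonal] at hp
      intro hc
      have h1 : p.2 = p.1 := congrArg Prod.fst hc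
      exact h ⟨p.1, by omega⟩
    · intro p hp
      simp only [Finset.HasAntidiagonal.mem_antidiagonal] at hp ⊢
      omega
    · intro p _
      rfl

lemma coeff_pow_two_pow [CharP A 2] (g : PowerSeries A) (j n : ℕ) :
    PowerSeries.coeff n (g ^ (2 ^ j)) =
      if 2 ^ j ∣ n then (PowerSeries.coeff (n / 2 ^ j) g) ^ (2 ^ j) else 0 := by
  classical
  induction j generalizing n with
  | zero => simp
  | succ j ih =>
    have : g ^ (2 ^ (j + 1)) = (g ^ (2 ^ j)) ^ 2 := by
      rw [← pow_mul, pow_succ]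
    rw [this, coeff_sq]
    by_cases h2 : 2 ∣ n
    · obtain ⟨m, rfl⟩ := h2
      rw [if_pos ⟨m, rfl⟩, Nat.mul_div_cancel_left m (by norm_num : 0 < 2), ih]
      by_cases hj : 2 ^ j ∣ m
      · rw [if_pos hj, if_pos (by obtain ⟨c, rfl⟩ := hj; exact ⟨c, by ring⟩)]
        rw [← pow_mul, ← pow_succ]
        congr 2
        obtain ⟨c, rfl⟩ := hj
        rw [Nat.mul_div_cancel_left c (Nat.pow_pos (n := j) (by norm_num))]
        rw [show 2 * (2 ^ j * c) = 2 ^ (j + 1) * c by ring,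
          Nat.mul_div_cancel_left c (Nat.pow_pos (n := (j + 1)) (by norm_num))]
      · rw [if_neg hj, if_neg (by
          rintro ⟨c, hc⟩
          rw [pow_succ, mul_comm ((2:ℕ) ^ j) 2, mul_assoc] at hc
          exact hj ⟨c, Nat.eq_of_mul_eq_mul_left (by norm_num) hc⟩)]
        exact zero_pow (by norm_num)
    · rw [if_neg h2, if_neg (fun hc => h2 (dvd_trans ⟨2 ^ j, by ring⟩ hc))]

lemma IsAdditiveSeries.coeff_zero {f : PowerSeries A} (hf : IsAdditiveSeries A f) :
    PowerSeries.coeff 0 f = 0 := by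
  apply hf.2
  rintro ⟨i, hi⟩
  exact absurd hi.symm (Nat.pow_pos (n := i) (by norm_num : 0 < 2)).ne'

lemma comp_coeff_eq_zero [CharP A 2] {f g : PowerSeries A} (hf : IsAdditiveSeries A f)
    (hg : IsAdditiveSeries A g) {m : ℕ} (hm : ¬ ∃ i : ℕ, m = 2 ^ i) :
    PowerSeries.coeff m (psComp A f g) = 0 := by
  rw [coeff_psComp]
  apply Finset.sum_eq_zero
  intro k _
  by_cases hk : ∃ j : ℕ, k = 2 ^ j
  · obtain ⟨j, rfl⟩ := hk
    rw [coeff_pow_two_pow]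
    by_cases hd : 2 ^ j ∣ m
    · rw [if_pos hd]
      have : PowerSeries.coeff (m / 2 ^ j) g = 0 := by
        apply hg.2
        rintro ⟨i, hi⟩
        exact hm ⟨j + i, by
          obtain ⟨c, rfl⟩ := hd
          rw [Nat.mul_div_cancel_left c (Nat.pow_pos (n := j) (by norm_num))] at hi
          subst hi
          rw [pow_add]⟩
      rw [this, zero_pow (Nat.pow_pos (n := j) (by norm_num)).ne', mul_zero]
    · rw [if_neg hd, mul_zero]
  · rw [hf.2 k hk, zero_mul]

lemma comp_coeff_pow [CharP A 2] {f : PowerSeries A} (hf : IsAdditiveSeries A f)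
    (g : PowerSeries A) (n : ℕ) :
    PowerSeries.coeff (2 ^ n) (psComp A f g) =
      ∑ j ∈ Finset.range (n + 1),
        PowerSeries.coeff (2 ^ j) f * (PowerSeries.coeff (2 ^ (n - j)) g) ^ (2 ^ j) := by
  classical
  rw [coeff_psComp]
  rw [← Finset.sum_subset (s₁ := (Finset.range (n + 1)).image (2 ^ ·))
    (by
      intro k hk
      simp only [Finset.mem_image, Finset.mem_range] at hk
      obtain ⟨j, hj, rfl⟩ := hk
      simp only [Finset.mem_range]
      exact Nat.lt_succ_of_le (Nat.pow_le_pow_right (by norm_num) (by omega)))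
    (by
      intro k hk hk'
      by_cases hkp : ∃ j : ℕ, k = 2 ^ j
      · obtain ⟨j, rfl⟩ := hkp
        exfalso
        apply hk'
        simp only [Finset.mem_image, Finset.mem_range]
        refine ⟨j, ?_, rfl⟩
        simp only [Finset.mem_range] at hk
        have : 2 ^ j ≤ 2 ^ n := by omega
        have := (Nat.pow_le_pow_iff_right (by norm_num : 1 < 2)).mp this
        omega
      · rw [hf.2 k hkp, zero_mul])]
  rw [Finset.sum_image (by
    intro x _ y _ hxy
    exact Nat.pow_right_injective (by norm_num) hxy)]
  apply Finset.sum_congr rfl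
  intro j hj
  simp only [Finset.mem_range] at hj
  rw [coeff_pow_two_pow, if_pos (pow_dvd_pow 2 (by omega)),
    Nat.pow_div (by omega) (by norm_num)]

lemma comp_additive [CharP A 2] {f g : PowerSeries A} (hf : IsAdditiveSeries A f)
    (hg : IsAdditiveSeries A g) : IsAdditiveSeries A (psComp A f g) := by
  constructor
  · have h := comp_coeff_pow hf g 0
    simpa [hf.1, hg.1] using h
  · intro k hk
    exact comp_coeff_eq_zero hf hg hk

lemma psComp_X_right (f : PowerSeries A) : psComp A f PowerSeries.X = f := by
  ext n
  rw [coeff_psComp]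
  rw [Finset.sum_eq_single n]
  · rw [PowerSeries.coeff_X_pow, if_pos rfl, mul_one]
  · intro k _ hk
    rw [PowerSeries.coeff_X_pow, if_neg (fun h => hk h.symm), mul_zero]
  · intro h
    exact absurd (Finset.self_mem_range_succ n) h

lemma psComp_X_left (g : PowerSeries A) (h0 : PowerSeries.coeff 0 g = 0) :
    psComp A PowerSeries.X g = g := by
  ext n
  rw [coeff_psComp]
  cases n with
  | zero => simpa using h0.symm
  | succ m =>
    rw [Finset.sum_eq_single 1]
    · simp [PowerSeries.coeff_X]
    · intro k _ hk
      rw [PowerSeries.coeff_X, if_neg hk, zero_mul]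
    · intro h
      exact absurd (Finset.mem_range.mpr (by omega)) h

lemma psComp_assoc [CharP A 2] {f g h : PowerSeries A} (hf : IsAdditiveSeries A f)
    (hg : IsAdditiveSeries A g) (hh : IsAdditiveSeries A h) :
    psComp A (psComp A f g) h = psComp A f (psComp A g h) := by
  classical
  haveI : ExpChar A 2 := ExpChar.prime Nat.prime_two
  ext m
  by_cases hm : ∃ i : ℕ, m = 2 ^ i
  · obtain ⟨n, rfl⟩ := hm
    rw [comp_coeff_pow (comp_additive hf hg) h n, comp_coeff_pow hf (psComp A g h) n]
    have LHS : ∀ i ∈ Finset.range (n + 1),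
        PowerSeries.coeff (2 ^ i) (psComp A f g) *
          (PowerSeries.coeff (2 ^ (n - i)) h) ^ (2 ^ i) =
        ∑ j ∈ Finset.range (i + 1),
          PowerSeries.coeff (2 ^ j) f * (PowerSeries.coeff (2 ^ (i - j)) g) ^ (2 ^ j) *
            (PowerSeries.coeff (2 ^ (n - i)) h) ^ (2 ^ i) := by
      intro i _
      rw [comp_coeff_pow hf g i, Finset.sum_mul]
    have RHS : ∀ i ∈ Finset.range (n + 1),
        PowerSeries.coeff (2 ^ i) f *
          (PowerSeries.coeff (2 ^ (n - i)) (psComp A g h)) ^ (2 ^ i) =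
        ∑ j ∈ Finset.range (n - i + 1),
          PowerSeries.coeff (2 ^ i) f * ((PowerSeries.coeff (2 ^ j) g) ^ (2 ^ i) *
            (PowerSeries.coeff (2 ^ (n - i - j)) h) ^ (2 ^ j * 2 ^ i)) := by
      intro i _
      rw [comp_coeff_pow hg h (n - i), sum_pow_char_pow, Finset.mul_sum]
      apply Finset.sum_congr rfl
      intro j _
      rw [mul_pow, ← pow_mul]
    rw [Finset.sum_congr rfl LHS, Finset.sum_congr rfl RHS,
      Finset.sum_sigma', Finset.sum_sigma']
    apply Finset.sum_nbij' (fun p => ⟨p.2, p.1 - p.2⟩) (fun p => ⟨p.1 + p.2, p.1⟩)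
    · rintro ⟨i, j⟩ hp
      simp only [Finset.mem_sigma, Finset.mem_range] at hp ⊢
      omega
    · rintro ⟨i, j⟩ hp
      simp only [Finset.mem_sigma, Finset.mem_range] at hp ⊢
      omega
    · rintro ⟨i, j⟩ hp
      simp only [Finset.mem_sigma, Finset.mem_range] at hp
      exact Sigma.ext (show j + (i - j) = i by omega) (heq_of_eq rfl)
    · rintro ⟨i, j⟩ hp
      simp only [Finset.mem_sigma, Finset.mem_range] at hp
      exact Sigma.ext rfl (heq_of_eq (show i + j - i = j by omega))
    · rintro ⟨i, j⟩ hp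
      simp only [Finset.mem_sigma, Finset.mem_range] at hp
      have e1 : n - j - (i - j) = n - i := by omega
      have e2 : 2 ^ (i - j) * 2 ^ j = 2 ^ i := by
        rw [← pow_add]
        congr 1
        omega
      rw [e1, e2]
      ring
  · rw [comp_coeff_eq_zero (comp_additive hf hg) hh hm,
      comp_coeff_eq_zero hf (comp_additive hg hh) hm]

/-- The coefficients of the compositional inverse of an additive series with
coefficients `a`. -/
def invCoeff (a : ℕ → A) : ℕ → A
  | 0 => 1
  | (n + 1) => ∑ i ∈ Finset.range (n + 1), a (i + 1) * (invCoeff a (n - i)) ^ (2 ^ (i + 1))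
  termination_by n => n
  decreasing_by omega

lemma invCoeff_zero (a : ℕ → A) : invCoeff a 0 = 1 := by rw [invCoeff]

lemma invCoeff_succ (a : ℕ → A) (n : ℕ) :
    invCoeff a (n + 1) =
      ∑ i ∈ Finset.range (n + 1), a (i + 1) * (invCoeff a (n - i)) ^ (2 ^ (i + 1)) := by
  rw [invCoeff]

lemma exists_right_inv [CharP A 2] {f : PowerSeries A} (hf : IsAdditiveSeries A f) :
    ∃ g : PowerSeries A, IsAdditiveSeries A g ∧ psComp A f g = PowerSeries.X := by
  classical
  set a : ℕ → A := fun i => PowerSeries.coeff (2 ^ i) f with ha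
  set b : ℕ → A := invCoeff a with hb
  set g : PowerSeries A := PowerSeries.mk fun k =>
    if 2 ^ Nat.log 2 k = k ∧ k ≠ 0 then b (Nat.log 2 k) else 0 with hgdef
  have hcoeffg : ∀ n : ℕ, PowerSeries.coeff (2 ^ n) g = b n := by
    intro n
    rw [hgdef, PowerSeries.coeff_mk]
    rw [if_pos ⟨by rw [Nat.log_pow (by norm_num)],
      (Nat.pow_pos (n := n) (by norm_num)).ne'⟩, Nat.log_pow (by norm_num)]
  have hg : IsAdditiveSeries A g := by
    constructor
    · have := hcoeffg 0
      simpa [hb, invCoeff] using this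
    · intro k hk
      rw [hgdef, PowerSeries.coeff_mk, if_neg]
      rintro ⟨h1, h2⟩
      exact hk ⟨Nat.log 2 k, h1.symm⟩
  refine ⟨g, hg, ?_⟩
  ext m
  by_cases hm : ∃ i : ℕ, m = 2 ^ i
  · obtain ⟨n, rfl⟩ := hm
    rw [comp_coeff_pow hf g n]
    have key : ∀ j, PowerSeries.coeff (2 ^ j) g = b j := hcoeffg
    cases n with
    | zero =>
      rw [Finset.sum_range_one, Nat.sub_zero, key 0]
      have h00 : b 0 = 1 := by rw [hb, invCoeff_zero]
      rw [h00]
      simpa [PowerSeries.coeff_X] using hf.1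
    | succ n =>
      rw [PowerSeries.coeff_X, if_neg (by
        have : (2:ℕ) ^ (n + 1) ≥ 2 := Nat.le_self_pow (by omega) 2
        omega)]
      rw [Finset.sum_range_succ']
      simp only [key, Nat.succ_sub_succ, Nat.sub_zero, pow_zero, pow_one]
      have hsum : ∑ i ∈ Finset.range (n + 1),
          PowerSeries.coeff (2 ^ (i + 1)) f * b (n - i) ^ 2 ^ (i + 1) = b (n + 1) := by
        rw [hb, invCoeff_succ]
      have h1f : PowerSeries.coeff (2 ^ 0) f = 1 := by
        simpa using hf.1
      rw [hsum]
      calc b (n + 1) + PowerSeries.coeff 1 f * b (n + 1)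
          = b (n + 1) + b (n + 1) := by rw [hf.1, one_mul]
        _ = 0 := CharTwo.add_self_eq_zero _
  · rw [comp_coeff_eq_zero hf hg hm, PowerSeries.coeff_X, if_neg (by
      rintro rfl
      exact hm ⟨0, rfl⟩)]

variable (A)

/-- Over an `𝔽_2`-algebra `A`, the set of power series `a(T) = T + ∑_{i≥1} a_i T^{2^i}`
is a group under composition: it contains the identity `T`, is closed under
composition, and every element has a compositional inverse of the same form. -/
theorem additive_series_group_under_composition [CharP A 2] :
    IsAdditiveSeries A PowerSeries.X ∧
    (∀ f g : PowerSeries A, IsAdditiveSeries A f → IsAdditiveSeries A g →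
      IsAdditiveSeries A (psComp A f g)) ∧
    (∀ f g h : PowerSeries A, IsAdditiveSeries A f → IsAdditiveSeries A g →
      IsAdditiveSeries A h → psComp A (psComp A f g) h = psComp A f (psComp A g h)) ∧
    (∀ f : PowerSeries A, IsAdditiveSeries A f →
      ∃ g : PowerSeries A, IsAdditiveSeries A g ∧
        psComp A f g = PowerSeries.X ∧ psComp A g f = PowerSeries.X) := by
  have hX : IsAdditiveSeries A PowerSeries.X := by
    constructor
    · simp [PowerSeries.coeff_X]
    · intro k hk
      rw [PowerSeries.coeff_X, if_neg (by rintro rfl; exact hk ⟨0, rfl⟩)]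
  refine ⟨hX, fun f g hf hg => comp_additive hf hg,
    fun f g h hf hg hh => psComp_assoc hf hg hh, ?_⟩
  intro f hf
  obtain ⟨g, hg, hfg⟩ := exists_right_inv hf
  obtain ⟨h, hh, hgh⟩ := exists_right_inv hg
  have key : f = h := by
    calc f = psComp A f PowerSeries.X := (psComp_X_right f).symm
      _ = psComp A f (psComp A g h) := by rw [hgh]
      _ = psComp A (psComp A f g) h := (psComp_assoc hf hg hh).symm
      _ = psComp A PowerSeries.X h := by rw [hfg]
      _ = h := psComp_X_left h hh.coeff_zero
  exact ⟨g, hg, hfg, by rw [key]; exact hgh⟩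

end
end

section
/- For a finite Galois field extension E/F with Galois group G, there is an E-algebra isomorphism E ⊗_F E ≅ ∏_{g ∈ G} E, given by x ⊗ y ↦ (x · g(y))_{g ∈ G}. -/
open TensorProduct

/-- For a finite Galois extension `E/F` with Galois group `G = Gal(E/F)`, there is an
`E`-algebra isomorphism `E ⊗_F E ≅ ∏_{g ∈ G} E` given by `x ⊗ y ↦ (x · g(y))_g`,
where `E ⊗_F E` is an `E`-algebra via the left factor. -/
theorem galois_tensor_product_iso (F E : Type*) [Field F] [Field E] [Algebra F E]
    [FiniteDimensional F E] [IsGalois F E] :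
    ∃ φ : (E ⊗[F] E) ≃ₐ[E] ((E ≃ₐ[F] E) → E),
      ∀ (x y : E) (g : E ≃ₐ[F] E), φ (x ⊗ₜ[F] y) g = x * g y := by
  classical
  let f₁ : E →ₐ[E] ((E ≃ₐ[F] E) → E) := Algebra.ofId E _
  let f₂ : E →ₐ[F] ((E ≃ₐ[F] E) → E) := Pi.algHom F _ fun g => g.toAlgHom
  let ψ : (E ⊗[F] E) →ₐ[E] ((E ≃ₐ[F] E) → E) :=
    Algebra.TensorProduct.lift f₁ f₂ fun _ _ => Commute.all _ _
  have hψ : ∀ (x y : E) (g : E ≃ₐ[F] E), ψ (x ⊗ₜ[F] y) g = x * g y := by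
    intro x y g
    simp [ψ, Algebra.TensorProduct.lift_tmul, f₁, f₂, Algebra.ofId_apply,
      Pi.algebraMap_apply, Algebra.algebraMap_self_apply]
  -- linear independence of characters
  have hli : LinearIndependent E (fun g : E ≃ₐ[F] E => (g : E → E)) := by
    have := linearIndependent_monoidHom E E
    exact this.comp (fun g : E ≃ₐ[F] E => (g : E →* E))
      (fun g g' h => by
        ext x
        exact DFunLike.congr_fun h x)
  -- surjectivity
  have hsurj : Function.Surjective ψ := by
    have : Function.Surjective ψ.toLinearMap → Function.Surjective ψ := fun h => h
    apply this
    rw [← LinearMap.range_eq_top]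
    by_contra h
    obtain ⟨ℓ, hℓ, hker⟩ := Submodule.exists_dual_map_eq_bot_of_lt_top
      (lt_top_iff_ne_top.mpr h) inferInstance
    have hvanish : ∀ z, ℓ (ψ z) = 0 := by
      intro z
      have : ψ z ∈ LinearMap.range ψ.toLinearMap := ⟨z, rfl⟩
      have := Submodule.mem_map_of_mem (f := ℓ) this
      rw [hker] at this
      exact (Submodule.mem_bot _).mp this
    -- ℓ v = ∑ g, v g * ℓ (Pi.single g 1)
    have hrep : ∀ v : (E ≃ₐ[F] E) → E,
        ℓ v = ∑ g : E ≃ₐ[F] E, v g * ℓ (Pi.single g 1) := by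
      intro v
      have : v = ∑ g : E ≃ₐ[F] E, v g • Pi.single (M := fun _ => E) g 1 := by
        ext g'
        simp [Finset.sum_apply, Pi.single_apply]
      conv_lhs => rw [this]
      simp [map_sum, map_smul, smul_eq_mul]
    have hzero : ∀ g : E ≃ₐ[F] E, ℓ (Pi.single g 1) = 0 := by
      have key : (fun y => ∑ g : E ≃ₐ[F] E, ℓ (Pi.single g 1) * g y) = 0 := by
        funext y
        have := hvanish (1 ⊗ₜ[F] y)
        rw [hrep] at this
        simpa [hψ, mul_comm] using this
      have := (Fintype.linearIndependent_iff.mp hli)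
        (fun g => ℓ (Pi.single g 1))
      apply this
      funext y
      simpa [Finset.sum_apply, smul_eq_mul] using congrFun key y
    apply hℓ
    refine LinearMap.ext fun v => ?_
    rw [hrep]
    simp [hzero]
  -- injectivity via dimension count
  have hdim : Module.finrank E (E ⊗[F] E) = Module.finrank E ((E ≃ₐ[F] E) → E) := by
    rw [Module.finrank_baseChange, Module.finrank_pi, ← Nat.card_eq_fintype_card, IsGalois.card_aut_eq_finrank]
  have hinj : Function.Injective ψ :=
    (LinearMap.injective_iff_surjective_of_finrank_eq_finrank hdim).mpr hsurj
  exact ⟨AlgEquiv.ofBijective ψ ⟨hinj, hsurj⟩, hψ⟩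
end
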